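/- For m = 2^k users with file sets, if at every node of a complete binary tree of recursive bisections the two halves' file unions are mutually non-contained (the splitting condition holds), then there is a sequence of pairwise exchanges under the give-and-take rule after which every user possesses the union F of all users' files. -/

import Mathlib

open Classical

/-- Result of an exchange: both participants end up with the union of
their current file sets (all other users are unchanged). -/
noncomputable def applyExchange {α β : Type*} [DecidableEq α] [DecidableEq β]
    (C : α → Finset β) (pr : α × α) : α → Finset β :=
  fun u => if u = pr.1 ∨ u = pr.2 then C pr.1 ∪ C pr.2 else C u

/-- A schedule of exchanges is valid if each exchange, performed in order,
satisfies the give-and-take (GT) criterion at the time it is performed. -/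
inductive ValidSchedule {α β : Type*} [DecidableEq α] [DecidableEq β] :
    (α → Finset β) → List (α × α) → Prop
  | nil (C : α → Finset β) : ValidSchedule C []
  | cons (C : α → Finset β) (i j : α) (l : List (α × α))
      (hij : ¬ C i ⊆ C j) (hji : ¬ C j ⊆ C i)
      (htail : ValidSchedule (applyExchange C (i, j)) l) :
      ValidSchedule C ((i, j) :: l)

section Aux

variable {α β : Type*} [DecidableEq α] [DecidableEq β]

lemma foldl_untouched (D : α → Finset β) (l : List (α × α)) (u : α)
    (h : ∀ p ∈ l, u ≠ p.1 ∧ u ≠ p.2) :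
    List.foldl applyExchange D l u = D u := by
  induction l generalizing D with
  | nil => rfl
  | cons p l ih =>
    have hp := h p (by simp)
    simp only [List.foldl_cons]
    rw [ih _ (fun q hq => h q (by simp [hq]))]
    simp [applyExchange, hp.1, hp.2]

lemma valid_append {l1 : List (α × α)} : ∀ {D : α → Finset β} {l2 : List (α × α)},
    ValidSchedule D l1 → ValidSchedule (List.foldl applyExchange D l1) l2 →
    ValidSchedule D (l1 ++ l2) := by
  induction l1 with
  | nil => intro D l2 _ h2; exact h2
  | cons p l ih =>
    intro D l2 h1 h2
    cases h1 with
    | cons _ i j _ hij hji htail =>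
      exact ValidSchedule.cons _ _ _ _ hij hji (ih htail h2)

/-- A round of exchanges along pairwise disjoint pairs, each satisfying
the GT criterion for the initial state `D`, is a valid schedule and each
participant ends with the union of its pair's sets. -/
lemma round_valid (l : List (α × α)) : ∀ (D : α → Finset β),
    l.Pairwise (fun p q => p.1 ≠ q.1 ∧ p.1 ≠ q.2 ∧ p.2 ≠ q.1 ∧ p.2 ≠ q.2) →
    (∀ p ∈ l, ¬ D p.1 ⊆ D p.2 ∧ ¬ D p.2 ⊆ D p.1) →
    ValidSchedule D l ∧
      ∀ p ∈ l, List.foldl applyExchange D l p.1 = D p.1 ∪ D p.2 ∧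
               List.foldl applyExchange D l p.2 = D p.1 ∪ D p.2 := by
  induction l with
  | nil => intro D _ _; exact ⟨ValidSchedule.nil D, by simp⟩
  | cons p l ih =>
    intro D hd hgt
    obtain ⟨a, b⟩ := p
    have hd' := List.pairwise_cons.mp hd
    set D1 := applyExchange D (a, b) with hD1
    have hagree : ∀ q ∈ l, D1 q.1 = D q.1 ∧ D1 q.2 = D q.2 := by
      intro q hq
      obtain ⟨h1, h2, h3, h4⟩ := hd'.1 q hq
      constructor <;>
        simp [hD1, applyExchange, (Ne.symm h1), (Ne.symm h2), (Ne.symm h3), (Ne.symm h4)]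
    have hgt' : ∀ q ∈ l, ¬ D1 q.1 ⊆ D1 q.2 ∧ ¬ D1 q.2 ⊆ D1 q.1 := by
      intro q hq
      rw [(hagree q hq).1, (hagree q hq).2]
      exact hgt q (List.mem_cons_of_mem _ hq)
    obtain ⟨hv, hf⟩ := ih D1 hd'.2 hgt'
    have hgtab := hgt (a, b) List.mem_cons_self
    have hab1 : D1 a = D a ∪ D b := by simp [hD1, applyExchange]
    have hab2 : D1 b = D a ∪ D b := by simp [hD1, applyExchange]
    have hua : List.foldl applyExchange D1 l a = D1 a := by
      apply foldl_untouched
      intro r hr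
      obtain ⟨h1, h2, _, _⟩ := hd'.1 r hr
      exact ⟨h1, h2⟩
    have hub : List.foldl applyExchange D1 l b = D1 b := by
      apply foldl_untouched
      intro r hr
      obtain ⟨_, _, h3, h4⟩ := hd'.1 r hr
      exact ⟨h3, h4⟩
    refine ⟨ValidSchedule.cons D a b l hgtab.1 hgtab.2 hv, ?_⟩
    intro q hq
    rcases List.mem_cons.mp hq with h | hq'
    · rw [h]
      simp only [List.foldl_cons]
      exact ⟨by rw [hua, hab1], by rw [hub, hab2]⟩
    · simp only [List.foldl_cons]
      have := hf q hq'
      rw [(hagree q hq').1, (hagree q hq').2] at this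
      exact this

end Aux

section State

variable {α β : Type*} [Fintype α] [DecidableEq α] [DecidableEq β]

/-- The state after processing all rounds for coordinates `j, j+1, ..., k-1`:
each user holds the union of the initial sets of all users agreeing with it on
the first `j` coordinates. -/
noncomputable def stateAt {k : ℕ} (σ : α ≃ (Fin k → Bool)) (C : α → Finset β)
    (j : ℕ) : α → Finset β :=
  fun u => (Finset.univ.filter
    (fun a : α => ∀ i : Fin k, (i : ℕ) < j → σ a i = σ u i)).biUnion C

lemma stateAt_top {k : ℕ} (σ : α ≃ (Fin k → Bool)) (C : α → Finset β) (u : α) :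
    stateAt σ C k u = C u := by
  have : (Finset.univ.filter
      (fun a : α => ∀ i : Fin k, (i : ℕ) < k → σ a i = σ u i)) = {u} := by
    ext a
    simp only [Finset.mem_filter, Finset.mem_univ, true_and, Finset.mem_singleton]
    constructor
    · intro h
      have : σ a = σ u := funext fun i => h i i.isLt
      exact σ.injective this
    · rintro rfl; intro i _; rfl
  rw [stateAt, this, Finset.singleton_biUnion]

lemma stateAt_zero {k : ℕ} (σ : α ≃ (Fin k → Bool)) (C : α → Finset β) (u : α) :
    stateAt σ C 0 u = Finset.univ.biUnion C := by
  rw [stateAt]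
  congr 1
  ext a
  simp

lemma stateAt_congr {k : ℕ} (σ : α ≃ (Fin k → Bool)) (C : α → Finset β) (j : ℕ)
    (u w : α) (h : ∀ i : Fin k, (i : ℕ) < j → σ u i = σ w i) :
    stateAt σ C j u = stateAt σ C j w := by
  unfold stateAt
  congr 1
  ext a
  simp only [Finset.mem_filter, Finset.mem_univ, true_and]
  constructor
  · intro ha i hi; rw [ha i hi, h i hi]
  · intro ha i hi; rw [ha i hi, ← h i hi]

end State

/-- TreeSplit: for `m = 2^k` users (identified with `Fin k → Bool` via `σ`),
if every node of the complete binary tree of recursive bisections satisfies the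
splitting condition (the file unions of the two halves are mutually
non-contained), then there is a valid schedule of give-and-take exchanges after
which every user possesses the union of all users' files. -/
theorem treeSplit_schedule_exists {α β : Type*} [Fintype α] [DecidableEq α]
    [DecidableEq β] (k : ℕ) (σ : α ≃ (Fin k → Bool)) (C : α → Finset β)
    (hsplit : ∀ (j : ℕ) (hj : j < k) (v : Fin j → Bool),
      ¬ (Finset.univ.filter (fun u : α =>
            (∀ i : Fin j, σ u ⟨i, i.isLt.trans hj⟩ = v i) ∧ σ u ⟨j, hj⟩ = false)).biUnion C ⊆
          (Finset.univ.filter (fun u : α =>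
            (∀ i : Fin j, σ u ⟨i, i.isLt.trans hj⟩ = v i) ∧ σ u ⟨j, hj⟩ = true)).biUnion C ∧
      ¬ (Finset.univ.filter (fun u : α =>
            (∀ i : Fin j, σ u ⟨i, i.isLt.trans hj⟩ = v i) ∧ σ u ⟨j, hj⟩ = true)).biUnion C ⊆
          (Finset.univ.filter (fun u : α =>
            (∀ i : Fin j, σ u ⟨i, i.isLt.trans hj⟩ = v i) ∧ σ u ⟨j, hj⟩ = false)).biUnion C) :
    ∃ l : List (α × α), ValidSchedule C l ∧
      ∀ u : α, List.foldl applyExchange C l u = Finset.univ.biUnion C := by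
  classical
  -- One round of exchanges takes `stateAt σ C (j+1)` to `stateAt σ C j`.
  have round : ∀ (j : ℕ) (hj : j < k), ∃ L : List (α × α),
      ValidSchedule (stateAt σ C (j + 1)) L ∧
      ∀ u : α, List.foldl applyExchange (stateAt σ C (j + 1)) L u = stateAt σ C j u := by
    intro j hj
    set jf : Fin k := ⟨j, hj⟩ with hjf
    set flip : α → α := fun u => σ.symm (Function.update (σ u) jf true) with hflip
    have hflip_apply : ∀ u : α, σ (flip u) = Function.update (σ u) jf true := by
      intro u; simp [hflip]
    have hflip_jf : ∀ u : α, σ (flip u) jf = true := by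
      intro u; rw [hflip_apply]; simp
    have hflip_ne : ∀ u : α, ∀ i : Fin k, i ≠ jf → σ (flip u) i = σ u i := by
      intro u i hi; rw [hflip_apply, Function.update_of_ne hi]
    set L : List (α × α) :=
      ((Finset.univ.filter (fun u : α => σ u jf = false)).toList).map
        (fun u => (u, flip u)) with hL
    -- description of the two halves below a node
    have hhalf : ∀ u : α,
        stateAt σ C (j + 1) u = (Finset.univ.filter (fun a : α =>
          (∀ i : Fin j, σ a ⟨i, i.isLt.trans hj⟩ = σ u ⟨i, i.isLt.trans hj⟩) ∧
            σ a jf = σ u jf)).biUnion C := by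
      intro u
      unfold stateAt
      congr 1
      ext a
      simp only [Finset.mem_filter, Finset.mem_univ, true_and]
      constructor
      · intro h
        refine ⟨fun i => h ⟨i, i.isLt.trans hj⟩ (by simpa using i.isLt.trans_le (Nat.le_succ j)),
          h jf (by simp [hjf])⟩
      · rintro ⟨h1, h2⟩ i hi
        rcases Nat.lt_succ_iff_lt_or_eq.mp hi with hlt | heq
        · have := h1 ⟨(i : ℕ), hlt⟩
          simpa [Fin.eta] using this
        · have : i = jf := Fin.ext heq
          rw [this]; exact h2
    -- merging the two halves gives the parent node
    have hmerge : ∀ u : α, σ u jf = false →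
        stateAt σ C (j + 1) u ∪ stateAt σ C (j + 1) (flip u) = stateAt σ C j u := by
      intro u hu
      unfold stateAt
      ext x
      simp only [Finset.mem_union, Finset.mem_biUnion, Finset.mem_filter, Finset.mem_univ,
        true_and]
      constructor
      · rintro (⟨a, ha, hx⟩ | ⟨a, ha, hx⟩)
        · exact ⟨a, fun i hi => ha i (hi.trans (Nat.lt_succ_self j)), hx⟩
        · refine ⟨a, fun i hi => ?_, hx⟩
          have hne : i ≠ jf := by
            intro h; rw [h] at hi; simp [hjf] at hi
          rw [ha i (hi.trans (Nat.lt_succ_self j)), hflip_ne u i hne]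
      · rintro ⟨a, ha, hx⟩
        by_cases hb : σ a jf = false
        · refine Or.inl ⟨a, fun i hi => ?_, hx⟩
          rcases Nat.lt_succ_iff_lt_or_eq.mp hi with hlt | heq
          · exact ha i hlt
          · have : i = jf := Fin.ext heq
            rw [this, hb, hu]
        · refine Or.inr ⟨a, fun i hi => ?_, hx⟩
          rcases Nat.lt_succ_iff_lt_or_eq.mp hi with hlt | heq
          · have hne : i ≠ jf := by
              intro h; rw [h] at hlt; simp [hjf] at hlt
            rw [ha i hlt, hflip_ne u i hne]
          · have : i = jf := Fin.ext heq
            rw [this, hflip_jf]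
            simp at hb; exact hb
    -- the GT criterion holds for each pair of the round
    have hGT : ∀ u : α, σ u jf = false →
        ¬ stateAt σ C (j + 1) u ⊆ stateAt σ C (j + 1) (flip u) ∧
        ¬ stateAt σ C (j + 1) (flip u) ⊆ stateAt σ C (j + 1) u := by
      intro u hu
      have h1 := hhalf u
      have h2 := hhalf (flip u)
      have hpre : ∀ i : Fin j, σ (flip u) ⟨i, i.isLt.trans hj⟩ = σ u ⟨i, i.isLt.trans hj⟩ := by
        intro i
        apply hflip_ne
        intro h
        have := congrArg Fin.val h
        simp [hjf] at this
        omega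
      rw [hu] at h1
      rw [hflip_jf u] at h2
      simp only [hpre] at h2
      have := hsplit j hj (fun i : Fin j => σ u ⟨i, i.isLt.trans hj⟩)
      rw [h1, h2]
      exact this
    -- the pairs of the round are pairwise disjoint
    have hflip_inj : ∀ u w : α, σ u jf = false → σ w jf = false → flip u = flip w → u = w := by
      intro u w hu hw h
      apply σ.injective
      have h' : Function.update (σ u) jf true = Function.update (σ w) jf true := by
        have := congrArg σ h
        rwa [hflip_apply, hflip_apply] at this
      funext i
      by_cases hi : i = jf
      · rw [hi, hu, hw]
      · have := congrFun h' i
        rwa [Function.update_of_ne hi, Function.update_of_ne hi] at this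
    have hmemL : ∀ u : α, u ∈ (Finset.univ.filter (fun u : α => σ u jf = false)).toList →
        σ u jf = false := by
      intro u hu
      have := Finset.mem_toList.mp hu
      exact (Finset.mem_filter.mp this).2
    have hpw : L.Pairwise (fun p q => p.1 ≠ q.1 ∧ p.1 ≠ q.2 ∧ p.2 ≠ q.1 ∧ p.2 ≠ q.2) := by
      rw [hL, List.pairwise_map]
      apply List.Pairwise.imp_of_mem (l := (Finset.univ.filter
        (fun u : α => σ u jf = false)).toList) (R := (· ≠ ·))
      · intro x y hx hy hxy
        have hxf := hmemL x hx
        have hyf := hmemL y hy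
        refine ⟨hxy, ?_, ?_, ?_⟩
        · show x ≠ flip y
          intro h; rw [h] at hxf; rw [hflip_jf] at hxf; simp at hxf
        · show flip x ≠ y
          intro h; rw [← h] at hyf; rw [hflip_jf] at hyf; simp at hyf
        · show flip x ≠ flip y
          intro h; exact hxy (hflip_inj x y hxf hyf h)
      · exact (Finset.nodup_toList _)
    have hgtL : ∀ p ∈ L, ¬ stateAt σ C (j + 1) p.1 ⊆ stateAt σ C (j + 1) p.2 ∧
        ¬ stateAt σ C (j + 1) p.2 ⊆ stateAt σ C (j + 1) p.1 := by
      intro p hp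
      rw [hL, List.mem_map] at hp
      obtain ⟨x, hx, rfl⟩ := hp
      exact hGT x (hmemL x hx)
    obtain ⟨hvL, hfL⟩ := round_valid L (stateAt σ C (j + 1)) hpw hgtL
    refine ⟨L, hvL, ?_⟩
    intro u
    by_cases hu : σ u jf = false
    · have hmem : (u, flip u) ∈ L := by
        rw [hL, List.mem_map]
        exact ⟨u, Finset.mem_toList.mpr (Finset.mem_filter.mpr ⟨Finset.mem_univ u, hu⟩), rfl⟩
      have := (hfL (u, flip u) hmem).1
      rw [this]
      exact hmerge u hu
    · -- u has bit true; it is the second member of the pair of its buddy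
      set w : α := σ.symm (Function.update (σ u) jf false) with hw
      have hut : σ u jf = true := by simpa using hu
      have hσw : σ w = Function.update (σ u) jf false := by simp [hw]
      have hwf : σ w jf = false := by rw [hσw]; simp
      have hfw : flip w = u := by
        rw [hflip]
        apply σ.injective
        rw [Equiv.apply_symm_apply, hσw, Function.update_idem]
        rw [← hut, Function.update_eq_self]
      have hmem : (w, flip w) ∈ L := by
        rw [hL, List.mem_map]
        exact ⟨w, Finset.mem_toList.mpr (Finset.mem_filter.mpr ⟨Finset.mem_univ w, hwf⟩), rfl⟩
      have h2 : List.foldl applyExchange (stateAt σ C (j + 1)) L u =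
          stateAt σ C (j + 1) w ∪ stateAt σ C (j + 1) (flip w) := by
        simpa [hfw] using (hfL (w, flip w) hmem).2
      rw [h2, hmerge w hwf]
      apply stateAt_congr
      intro i hi
      have hne : i ≠ jf := by
        intro h; rw [h] at hi; simp [hjf] at hi
      rw [hσw, Function.update_of_ne hne]
    -- end of round
  have main : ∀ j, j ≤ k → ∃ l : List (α × α), ValidSchedule (stateAt σ C j) l ∧
      ∀ u : α, List.foldl applyExchange (stateAt σ C j) l u = Finset.univ.biUnion C := by
    intro j
    induction j with
    | zero =>
      intro _
      exact ⟨[], ValidSchedule.nil _, fun u => stateAt_zero σ C u⟩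
    | succ j ih =>
      intro hjk
      have hj : j < k := hjk
      obtain ⟨l, hv, hu⟩ := ih (le_of_lt hj)
      obtain ⟨L, hvL, hfL⟩ := round j hj
      have hfun : List.foldl applyExchange (stateAt σ C (j + 1)) L = stateAt σ C j :=
        funext hfL
      refine ⟨L ++ l, valid_append hvL (by rw [hfun]; exact hv), ?_⟩
      intro u
      rw [List.foldl_append, hfun]
      exact hu u
  obtain ⟨l, hv, hu⟩ := main k le_rfl
  have hk : stateAt σ C k = C := funext (stateAt_top σ C)
  rw [hk] at hv hu
  exact ⟨l, hv, hu⟩
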